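/- Let 𝔄₁, 𝔄₂ be hyperassignments with 𝔄₁ ≡ 𝔄₂, χ a quantifier prefix, and α ∈ {EA, AE}. Then nevl^α(𝔄₁,χ) ≡ evl^α(𝔄₂,χ); that is, the normal evolution and the evolution of equivalent hyperassignments along the same prefix are equivalent. (Appendix proposition on normal evolution.) -/

import Mathlib

namespace GFG

/-- Temporal valuations. -/
abbrev Val : Type := ℕ → Bool

/-- Assignments over a type `AP` of atomic propositions. -/
abbrev Asg (AP : Type*) : Type _ := AP → Val

section Hyper

variable {X : Type*}

/-- A hyperassignment: a nonempty set of subsets not containing `∅`. -/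
def IsHyp (𝔄 : Set (Set X)) : Prop := 𝔄 ≠ ∅ ∧ ∅ ∉ 𝔄

/-- A choice function for `𝔄`. -/
def IsChoice (𝔄 : Set (Set X)) (ϑ : Set X → X) : Prop := ∀ W ∈ 𝔄, ϑ W ∈ W

/-- The dual hyperassignment. -/
def hdual (𝔄 : Set (Set X)) : Set (Set X) :=
  { Y | ∃ ϑ : Set X → X, IsChoice 𝔄 ϑ ∧ Y = ϑ '' 𝔄 }

/-- The preorder `⊑` on hyperassignments. -/
def hle (𝔄₁ 𝔄₂ : Set (Set X)) : Prop := ∀ W₁ ∈ 𝔄₁, ∃ W₂ ∈ 𝔄₂, W₂ ⊆ W₁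

/-- The equivalence `≡` on hyperassignments. -/
def heqv (𝔄₁ 𝔄₂ : Set (Set X)) : Prop := hle 𝔄₁ 𝔄₂ ∧ hle 𝔄₂ 𝔄₁

/-- `par 𝔄`: partitions of `𝔄` into two disjoint parts. -/
def par (𝔄 : Set (Set X)) : Set (Set (Set X) × Set (Set X)) :=
  { pr | pr.1 ∪ pr.2 = 𝔄 ∧ Disjoint pr.1 pr.2 }

end Hyper

variable {AP : Type*}

/-- `a₁ ≈_p^{>k} a₂`. -/
def ApproxGT (p : AP) (k : ℕ) (a₁ a₂ : Asg AP) : Prop :=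
  (∀ q, q ≠ p → a₁ q = a₂ q) ∧ ∀ t ≤ k, a₁ p t = a₂ p t

/-- `a₁ ≈_p^{≥k} a₂`. -/
def ApproxGE (p : AP) (k : ℕ) (a₁ a₂ : Asg AP) : Prop :=
  (∀ q, q ≠ p → a₁ q = a₂ q) ∧ ∀ t < k, a₁ p t = a₂ p t

/-- Quantifier specifications `ς = (B,S)`. -/
abbrev Spec (AP : Type*) := Set AP × Set AP

/-- A `ς`-functor. -/
def IsSpecFunctor (ς : Spec AP) (F : Asg AP → Val) : Prop :=
  (∀ (k : ℕ) (a₁ a₂ : Asg AP), (∃ p ∈ ς.1, ApproxGT p k a₁ a₂) → F a₁ k = F a₂ k) ∧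
  (∀ (k : ℕ) (a₁ a₂ : Asg AP), (∃ p ∈ ς.2, ApproxGE p k a₁ a₂) → F a₁ k = F a₂ k)

variable [DecidableEq AP]

/-- `ext(a,F,p)`. -/
def extAsg (a : Asg AP) (F : Asg AP → Val) (p : AP) : Asg AP :=
  Function.update a p (F a)

/-- `ext(W,F,p)`. -/
def extSet (W : Set (Asg AP)) (F : Asg AP → Val) (p : AP) : Set (Asg AP) :=
  (fun a => extAsg a F p) '' W

/-- `ext_ς(𝔄,p)`. -/
def extSpec (ς : Spec AP) (𝔄 : Set (Set (Asg AP))) (p : AP) : Set (Set (Asg AP)) :=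
  { Y | ∃ W ∈ 𝔄, ∃ F : Asg AP → Val, IsSpecFunctor ς F ∧ Y = extSet W F p }

/-- Alternation flags. -/
inductive Flag : Type
  | EA : Flag
  | AE : Flag
  deriving DecidableEq

/-- The dual flag. -/
def Flag.dual : Flag → Flag
  | .EA => .AE
  | .AE => .EA

/-- GFG-QPTL formulas (LTL formulas abstracted as arbitrary sets of assignments). -/
inductive Formula (AP : Type*) : Type _ where
  | atom : Set (Asg AP) → Formula AP
  | neg : Formula AP → Formula AP
  | conj : Formula AP → Formula AP → Formula AP
  | disj : Formula AP → Formula AP → Formula AP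
  | ex : AP → Spec AP → Formula AP → Formula AP
  | all : AP → Spec AP → Formula AP → Formula AP

/-- The alternating Hodges semantics `𝔄 ⊨^α φ`. -/
def Sat : Formula AP → Flag → Set (Set (Asg AP)) → Prop
  | .atom Ψ, .EA, 𝔄 => ∃ W ∈ 𝔄, W ⊆ Ψ
  | .atom Ψ, .AE, 𝔄 => ∀ W ∈ 𝔄, W ∩ Ψ ≠ ∅
  | .neg φ, α, 𝔄 => ¬ Sat φ α.dual 𝔄
  | .conj φ₁ φ₂, .EA, 𝔄 =>
      ∀ pr ∈ par 𝔄, (pr.1 ≠ ∅ ∧ Sat φ₁ .EA pr.1) ∨ (pr.2 ≠ ∅ ∧ Sat φ₂ .EA pr.2)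
  | .conj φ₁ φ₂, .AE, 𝔄 =>
      ∀ pr ∈ par (hdual 𝔄), (pr.1 ≠ ∅ ∧ Sat φ₁ .EA pr.1) ∨ (pr.2 ≠ ∅ ∧ Sat φ₂ .EA pr.2)
  | .disj φ₁ φ₂, .AE, 𝔄 =>
      ∃ pr ∈ par 𝔄, (pr.1 ≠ ∅ → Sat φ₁ .AE pr.1) ∧ (pr.2 ≠ ∅ → Sat φ₂ .AE pr.2)
  | .disj φ₁ φ₂, .EA, 𝔄 =>
      ∃ pr ∈ par (hdual 𝔄), (pr.1 ≠ ∅ → Sat φ₁ .AE pr.1) ∧ (pr.2 ≠ ∅ → Sat φ₂ .AE pr.2)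
  | .ex p ς φ, .EA, 𝔄 => Sat φ .EA (extSpec ς 𝔄 p)
  | .ex p ς φ, .AE, 𝔄 => Sat φ .EA (extSpec ς (hdual 𝔄) p)
  | .all p ς φ, .AE, 𝔄 => Sat φ .AE (extSpec ς 𝔄 p)
  | .all p ς φ, .EA, 𝔄 => Sat φ .AE (extSpec ς (hdual 𝔄) p)

/-- Quantifier symbols. -/
inductive Quant : Type
  | qex : Quant
  | qall : Quant
  deriving DecidableEq

/-- Quantifier prefixes: finite lists of triples `(Q, ς, p)`. -/
abbrev QPrefix (AP : Type*) := List (Quant × Spec AP × AP)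

/-- `χφ`: the formula obtained by prefixing `φ` with the quantifiers of `χ`. -/
def applyPrefix : QPrefix AP → Formula AP → Formula AP
  | [], φ => φ
  | (Quant.qex, ς, p) :: χ, φ => .ex p ς (applyPrefix χ φ)
  | (Quant.qall, ς, p) :: χ, φ => .all p ς (applyPrefix χ φ)

/-- `Q` is `α`-coherent iff `(Q,α) ∈ {(∃,EA),(∀,AE)}`. -/
def coherent : Quant → Flag → Bool
  | .qex, .EA => true
  | .qall, .AE => true
  | _, _ => false

/-- The evolution `evl^α(𝔄,χ)` of a hyperassignment along a quantifier prefix. -/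
def evl (α : Flag) : Set (Set (Asg AP)) → QPrefix AP → Set (Set (Asg AP))
  | 𝔄, [] => 𝔄
  | 𝔄, (Q, ς, p) :: χ =>
      evl α (if coherent Q α then extSpec ς 𝔄 p else hdual (extSpec ς (hdual 𝔄) p)) χ

/-- The normal one-step extension used by the normal evolution in the
non-coherent case. -/
def nstep (ς : Spec AP) (𝔄 : Set (Set (Asg AP))) (p : AP) : Set (Set (Asg AP)) :=
  { Y | ∃ sel : (Asg AP → Val) → Set (Asg AP),
        (∀ F : Asg AP → Val, IsSpecFunctor ς F → sel F ∈ 𝔄) ∧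
        Y = ⋃ F ∈ { F : Asg AP → Val | IsSpecFunctor ς F }, extSet (sel F) F p }

/-- The normal evolution `nevl^α(𝔄,χ)`. -/
def nevl (α : Flag) : Set (Set (Asg AP)) → QPrefix AP → Set (Set (Asg AP))
  | 𝔄, [] => 𝔄
  | 𝔄, (Q, ς, p) :: χ =>
      nevl α (if coherent Q α then extSpec ς 𝔄 p else nstep ς 𝔄 p) χ

section Aux

open Classical

variable {X : Type*}

lemma hle_trans' {𝔄₁ 𝔄₂ 𝔄₃ : Set (Set X)} (h12 : hle 𝔄₁ 𝔄₂) (h23 : hle 𝔄₂ 𝔄₃) :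
    hle 𝔄₁ 𝔄₃ := by
  intro W₁ hW₁
  obtain ⟨W₂, hW₂, hs⟩ := h12 W₁ hW₁
  obtain ⟨W₃, hW₃, hs'⟩ := h23 W₂ hW₂
  exact ⟨W₃, hW₃, hs'.trans hs⟩

lemma heqv_trans' {𝔄₁ 𝔄₂ 𝔄₃ : Set (Set X)} (h12 : heqv 𝔄₁ 𝔄₂) (h23 : heqv 𝔄₂ 𝔄₃) :
    heqv 𝔄₁ 𝔄₃ := ⟨hle_trans' h12.1 h23.1, hle_trans' h23.2 h12.2⟩

lemma mem_nonempty_of_isHyp {𝔄 : Set (Set X)} (h : IsHyp 𝔄) {W : Set X} (hW : W ∈ 𝔄) :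
    W.Nonempty := by
  rcases Set.eq_empty_or_nonempty W with rfl | hne
  · exact absurd hW h.2
  · exact hne

lemma hdual_isHyp [Nonempty X] {𝔄 : Set (Set X)} (h : IsHyp 𝔄) : IsHyp (hdual 𝔄) := by
  constructor
  · have : (fun W => if hW : (∃ x, x ∈ W) then hW.choose else Classical.arbitrary X) '' 𝔄
        ∈ hdual 𝔄 := by
      refine ⟨_, ?_, rfl⟩
      intro W hW
      have hne : ∃ x, x ∈ W := mem_nonempty_of_isHyp h hW
      simp only [dif_pos hne]
      exact hne.choose_spec
    intro hempty
    rw [hempty] at this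
    exact this
  · rintro ⟨ϑ, hϑ, hY⟩
    obtain ⟨W, hW⟩ := Set.nonempty_iff_ne_empty.2 h.1
    exact absurd hY.symm (Set.nonempty_iff_ne_empty.1 ⟨ϑ W, W, hW, rfl⟩)

lemma hdual_anti [Nonempty X] {𝔄₁ 𝔄₂ : Set (Set X)} (h : hle 𝔄₁ 𝔄₂) :
    hle (hdual 𝔄₂) (hdual 𝔄₁) := by
  rintro Y ⟨ϑ, hϑ, rfl⟩
  choose f hf₁ hf₂ using h
  refine ⟨(fun W => if hW : W ∈ 𝔄₁ then ϑ (f W hW) else Classical.arbitrary X) '' 𝔄₁,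
    ⟨_, ?_, rfl⟩, ?_⟩
  · intro W hW
    simp only [dif_pos hW]
    exact hf₂ W hW (hϑ _ (hf₁ W hW))
  · rintro x ⟨W, hW, rfl⟩
    simp only [dif_pos hW]
    exact ⟨f W hW, hf₁ W hW, rfl⟩

end Aux

section AuxAP

open Classical

variable {AP : Type*} [DecidableEq AP]

lemma const_specFunctor (ς : Spec AP) :
    IsSpecFunctor ς (fun _ => fun _ => false) :=
  ⟨fun _ _ _ _ => rfl, fun _ _ _ _ => rfl⟩

lemma extSpec_isHyp {ς : Spec AP} {𝔄 : Set (Set (Asg AP))} {p : AP}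
    (h : IsHyp 𝔄) : IsHyp (extSpec ς 𝔄 p) := by
  constructor
  · obtain ⟨W, hW⟩ := Set.nonempty_iff_ne_empty.2 h.1
    intro hempty
    have : extSet W (fun _ => fun _ => false) p ∈ extSpec ς 𝔄 p :=
      ⟨W, hW, _, const_specFunctor ς, rfl⟩
    rw [hempty] at this; exact this
  · rintro ⟨W, hW, F, hF, hY⟩
    obtain ⟨a, ha⟩ := mem_nonempty_of_isHyp h hW
    exact absurd hY.symm (Set.nonempty_iff_ne_empty.1 ⟨extAsg a F p, a, ha, rfl⟩)

lemma extSpec_mono {ς : Spec AP} {𝔄₁ 𝔄₂ : Set (Set (Asg AP))} {p : AP}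
    (h : hle 𝔄₁ 𝔄₂) : hle (extSpec ς 𝔄₁ p) (extSpec ς 𝔄₂ p) := by
  rintro Y ⟨W₁, hW₁, F, hF, rfl⟩
  obtain ⟨W₂, hW₂, hs⟩ := h W₁ hW₁
  exact ⟨extSet W₂ F p, ⟨W₂, hW₂, F, hF, rfl⟩, Set.image_mono hs⟩

lemma nstep_isHyp {ς : Spec AP} {𝔄 : Set (Set (Asg AP))} {p : AP}
    (h : IsHyp 𝔄) : IsHyp (nstep ς 𝔄 p) := by
  obtain ⟨W₀, hW₀⟩ := Set.nonempty_iff_ne_empty.2 h.1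
  obtain ⟨a₀, ha₀⟩ := mem_nonempty_of_isHyp h hW₀
  constructor
  · intro hempty
    have : (⋃ F ∈ { F : Asg AP → Val | IsSpecFunctor ς F }, extSet W₀ F p) ∈ nstep ς 𝔄 p :=
      ⟨fun _ => W₀, fun _ _ => hW₀, rfl⟩
    rw [hempty] at this; exact this
  · rintro ⟨sel, hsel, hY⟩
    obtain ⟨a, ha⟩ := mem_nonempty_of_isHyp h (hsel _ (const_specFunctor ς))
    have : extAsg a (fun _ => fun _ => false) p ∈
        ⋃ F ∈ { F : Asg AP → Val | IsSpecFunctor ς F }, extSet (sel F) F p := by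
      simp only [Set.mem_iUnion]
      exact ⟨_, const_specFunctor ς, a, ha, rfl⟩
    rw [← hY] at this
    exact this

lemma nstep_mono {ς : Spec AP} {𝔄₁ 𝔄₂ : Set (Set (Asg AP))} {p : AP}
    (h : hle 𝔄₁ 𝔄₂) : hle (nstep ς 𝔄₁ p) (nstep ς 𝔄₂ p) := by
  rintro Y ⟨sel, hsel, rfl⟩
  choose f hf₁ hf₂ using h
  refine ⟨⋃ F ∈ { F : Asg AP → Val | IsSpecFunctor ς F },
      extSet (if hF : IsSpecFunctor ς F then f (sel F) (hsel F hF) else sel F) F p,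
    ⟨_, fun F hF => by simp only [dif_pos hF]; exact hf₁ _ _, rfl⟩, ?_⟩
  · intro x hx
    simp only [Set.mem_iUnion] at hx ⊢
    obtain ⟨F, hF, hx⟩ := hx
    refine ⟨F, hF, ?_⟩
    rw [Set.mem_setOf_eq] at hF
    rw [dif_pos hF] at hx
    exact Set.image_mono (hf₂ _ _) hx

lemma nstep_equiv_dual {ς : Spec AP} {𝔄 : Set (Set (Asg AP))} {p : AP}
    (h : IsHyp 𝔄) : heqv (nstep ς 𝔄 p) (hdual (extSpec ς (hdual 𝔄) p)) := by
  constructor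
  · -- nstep ⊑ dual ext dual
    rintro Y ⟨sel, hsel, rfl⟩
    have key : ∀ S ∈ extSpec ς (hdual 𝔄) p, ∃ x, x ∈ S ∧
        x ∈ ⋃ F ∈ { F : Asg AP → Val | IsSpecFunctor ς F }, extSet (sel F) F p := by
      rintro S ⟨V, ⟨ϑ, hϑ, rfl⟩, F, hF, rfl⟩
      refine ⟨extAsg (ϑ (sel F)) F p, ⟨ϑ (sel F), ⟨sel F, hsel F hF, rfl⟩, rfl⟩, ?_⟩
      simp only [Set.mem_iUnion]
      exact ⟨F, hF, ϑ (sel F), hϑ _ (hsel F hF), rfl⟩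
    choose g hg₁ hg₂ using key
    refine ⟨(fun S => if hS : S ∈ extSpec ς (hdual 𝔄) p then g S hS
        else Classical.arbitrary _) '' extSpec ς (hdual 𝔄) p, ⟨_, ?_, rfl⟩, ?_⟩
    · intro S hS
      simp only [dif_pos hS]
      exact hg₁ S hS
    · rintro x ⟨S, hS, rfl⟩
      simp only [dif_pos hS]
      exact hg₂ S hS
  · -- dual ext dual ⊑ nstep
    rintro Z ⟨η, hη, rfl⟩
    have key : ∀ F : Asg AP → Val, IsSpecFunctor ς F →
        ∃ W ∈ 𝔄, ∀ a ∈ W, extAsg a F p ∈ η '' extSpec ς (hdual 𝔄) p := by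
      intro F hF
      by_contra hcon
      push_neg at hcon
      choose g hg₁ hg₂ using hcon
      set ϑ : Set (Asg AP) → Asg AP := fun W =>
        if hW : W ∈ 𝔄 then g W hW else Classical.arbitrary _ with hϑdef
      have hϑ : IsChoice 𝔄 ϑ := by
        intro W hW
        simp only [hϑdef, dif_pos hW]
        exact hg₁ W hW
      have hVmem : ϑ '' 𝔄 ∈ hdual 𝔄 := ⟨ϑ, hϑ, rfl⟩
      have hSmem : extSet (ϑ '' 𝔄) F p ∈ extSpec ς (hdual 𝔄) p :=
        ⟨_, hVmem, F, hF, rfl⟩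
      have h1 : η (extSet (ϑ '' 𝔄) F p) ∈ extSet (ϑ '' 𝔄) F p := hη _ hSmem
      have h2 : η (extSet (ϑ '' 𝔄) F p) ∈ η '' extSpec ς (hdual 𝔄) p :=
        ⟨_, hSmem, rfl⟩
      obtain ⟨a, ⟨W, hW, rfl⟩, hae⟩ := h1
      have : ϑ W = g W hW := by simp only [hϑdef, dif_pos hW]
      rw [this] at hae
      rw [← hae] at h2
      exact hg₂ W hW h2
    choose selW hsel₁ hsel₂ using key
    obtain ⟨W₀, hW₀⟩ := Set.nonempty_iff_ne_empty.2 h.1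
    refine ⟨⋃ F ∈ { F : Asg AP → Val | IsSpecFunctor ς F },
        extSet (if hF : IsSpecFunctor ς F then selW F hF else W₀) F p,
      ⟨fun (F : Asg AP → Val) => if hF : IsSpecFunctor ς F then selW F hF else W₀,
        fun F hF => by simp only [dif_pos hF]; exact hsel₁ F hF, rfl⟩, ?_⟩
    intro x hx
    simp only [Set.mem_iUnion] at hx
    obtain ⟨F, hF, hx⟩ := hx
    rw [Set.mem_setOf_eq] at hF
    rw [dif_pos hF] at hx
    obtain ⟨a, ha, rfl⟩ := hx
    exact hsel₂ F hF a ha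

end AuxAP

/-- Normal evolution and evolution of equivalent hyperassignments along the
same prefix are equivalent. -/
theorem nevl_equiv_evl (𝔄₁ 𝔄₂ : Set (Set (Asg AP)))
    (h₁ : IsHyp 𝔄₁) (h₂ : IsHyp 𝔄₂) (h : heqv 𝔄₁ 𝔄₂)
    (χ : QPrefix AP) (α : Flag) :
    heqv (nevl α 𝔄₁ χ) (evl α 𝔄₂ χ) := by
  induction χ generalizing 𝔄₁ 𝔄₂ with
  | nil => exact h
  | cons t χ ih =>
    obtain ⟨Q, ς, p⟩ := t
    simp only [nevl, evl]
    by_cases hc : coherent Q α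
    · simp only [if_pos hc]
      exact ih _ _ (extSpec_isHyp h₁) (extSpec_isHyp h₂)
        ⟨extSpec_mono h.1, extSpec_mono h.2⟩
    · simp only [if_neg hc]
      refine ih _ _ (nstep_isHyp h₁) (hdual_isHyp (extSpec_isHyp (hdual_isHyp h₂))) ?_
      exact heqv_trans' (⟨nstep_mono h.1, nstep_mono h.2⟩ : heqv _ _) (nstep_equiv_dual h₂)

end GFG
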